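/- Let p be an odd prime and G a finite p-group. Any two automorphisms of G of order 2 that induce the same automorphism on G/Φ(G) are conjugate in Aut(G). Consequently, the number of fixed points z(G) of an order-2 automorphism acting as inversion on G^ab is independent of the choice of such automorphism. -/

import Mathlib

section Aux

variable {p : ℕ} [Fact p.Prime] {G : Type*} [Group G] [Finite G]

/-- An involution (squaring to 1) acting trivially on `G ⧸ frattini G` is trivial,
for `G` a finite `p`-group with `p` odd. -/
lemma aux_invol_trivial (hp : Odd p) (hG : IsPGroup p G) (b : MulAut G) (hb2 : b * b = 1)
    (hb : ∀ x : G, (QuotientGroup.mk (b x) : G ⧸ frattini G) = QuotientGroup.mk x) :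
    b = 1 := by
  let C : Subgroup G :=
    { carrier := {x | b x = x}
      one_mem' := map_one b
      mul_mem' := fun {x y} hx hy => by
        simp only [Set.mem_setOf_eq] at *; rw [map_mul, hx, hy]
      inv_mem' := fun {x} hx => by
        simp only [Set.mem_setOf_eq] at *; rw [map_inv, hx] }
  have hbb : ∀ y : G, b (b y) = y := by
    intro y
    have := congrArg (fun f : MulAut G => f y) hb2
    simpa [MulAut.mul_apply] using this
  have hsup : C ⊔ frattini G = ⊤ := by
    rw [eq_top_iff]
    intro x _
    have hgmem : x⁻¹ * b x ∈ frattini G := QuotientGroup.eq.mp (hb x).symm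
    set g : G := x⁻¹ * b x with hgdef
    have hbx : b x = x * g := by rw [hgdef]; group
    have hbg : b g = g⁻¹ := by
      have h1 : b (b x) = x := hbb x
      rw [hbx, map_mul, hbx] at h1
      have h2 : g * b g = 1 := by
        have h3 : x * (g * b g) = x * 1 := by rw [mul_one, ← mul_assoc]; exact h1
        exact mul_left_cancel h3
      exact (eq_inv_of_mul_eq_one_right h2)
    have hodd : Odd (orderOf g) := by
      obtain ⟨k, hk⟩ := hG g
      exact (hp.pow).of_dvd_nat (orderOf_dvd_of_pow_eq_one hk)
    obtain ⟨t, ht⟩ := hodd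
    have hgpow : g ^ (t + 1) * g ^ (t + 1) = g := by
      rw [← pow_add]
      have h4 : t + 1 + (t + 1) = orderOf g + 1 := by omega
      rw [h4, pow_succ, pow_orderOf_eq_one, one_mul]
    -- y = x * g ^ (t+1) is a fixed point of b
    have hy : b (x * g ^ (t + 1)) = x * g ^ (t + 1) := by
      rw [map_mul, map_pow, hbx, hbg, inv_pow, mul_assoc]
      congr 1
      rw [mul_inv_eq_iff_eq_mul]
      exact hgpow.symm
    have hymem : x * g ^ (t + 1) ∈ C := hy
    have : x = (x * g ^ (t + 1)) * (g ^ (t + 1))⁻¹ := by group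
    rw [this]
    exact mul_mem (Subgroup.mem_sup_left hymem)
      (Subgroup.mem_sup_right (inv_mem (pow_mem hgmem _)))
  have hC : C = ⊤ := frattini_nongenerating hsup
  ext x
  have : x ∈ C := hC ▸ Subgroup.mem_top x
  exact this

/-- The commutator subgroup of a finite `p`-group is contained in the Frattini subgroup. -/
lemma aux_commutator_le_frattini (hG : IsPGroup p G) : commutator G ≤ frattini G := by
  have hnil : Group.IsNilpotent G := hG.isNilpotent
  have hnc : NormalizerCondition G := normalizerCondition_of_isNilpotent
  rw [frattini, Order.radical]
  refine le_iInf fun M => le_iInf fun hM => ?_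
  haveI : M.Normal := Subgroup.NormalizerCondition.normal_of_coatom M hnc hM
  -- the quotient G ⧸ M has only the trivial subgroups, is nontrivial, hence cyclic
  have honly : ∀ K : Subgroup (G ⧸ M), K = ⊥ ∨ K = ⊤ := by
    intro K
    have hsurj : Function.Surjective (QuotientGroup.mk' M) := QuotientGroup.mk'_surjective M
    have hle : M ≤ K.comap (QuotientGroup.mk' M) := by
      intro m hm
      have h1 : (QuotientGroup.mk' M) m = 1 := (QuotientGroup.eq_one_iff m).mpr hm
      simp only [Subgroup.mem_comap, h1]
      exact one_mem K
    rcases lt_or_eq_of_le hle with h | h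
    · right
      have hK : K.comap (QuotientGroup.mk' M) = ⊤ := hM.2 _ h
      rw [← Subgroup.map_comap_eq_self_of_surjective hsurj K, hK]
      exact Subgroup.map_top_of_surjective _ hsurj
    · left
      rw [← Subgroup.map_comap_eq_self_of_surjective hsurj K, ← h]
      ext y
      simp only [Subgroup.mem_map, Subgroup.mem_bot]
      constructor
      · rintro ⟨m, hm, rfl⟩
        exact (QuotientGroup.eq_one_iff m).mpr hm
      · rintro rfl
        exact ⟨1, one_mem M, map_one _⟩
  have hnt : Nontrivial (G ⧸ M) := by
    obtain ⟨x, hx⟩ : ∃ x : G, x ∉ M := by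
      by_contra h
      push_neg at h
      exact hM.1 (Subgroup.eq_top_iff' M |>.mpr h)
    exact ⟨⟨(x : G ⧸ M), 1, by simpa [QuotientGroup.eq_one_iff] using hx⟩⟩
  obtain ⟨y, hy⟩ := exists_ne (1 : G ⧸ M)
  have hcyc : IsCyclic (G ⧸ M) := by
    refine ⟨⟨y, fun z => ?_⟩⟩
    rcases honly (Subgroup.zpowers y) with h | h
    · exact absurd (Subgroup.zpowers_eq_bot.mp h) hy
    · show z ∈ Subgroup.zpowers y
      rw [h]
      exact Subgroup.mem_top z
  have hcomm : ∀ a b : G ⧸ M, a * b = b * a := fun a b =>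
    letI := hcyc; letI : CommGroup (G ⧸ M) := IsCyclic.commGroup
    mul_comm a b
  rw [commutator, Subgroup.commutator_le]
  intro g₁ _ g₂ _
  open scoped commutatorElement in
  have h5 : (QuotientGroup.mk' M) ⁅g₁, g₂⁆ = 1 := by
    rw [map_commutatorElement]
    exact commutatorElement_eq_one_iff_mul_comm.mpr (hcomm _ _)
  exact (QuotientGroup.eq_one_iff _).mp h5

end Aux

/-- For a finite `p`-group `G` (`p` odd), any two order-2 automorphisms of `G`
inducing the same automorphism on `G/Φ(G)` are conjugate in `Aut(G)`; consequently the
number of fixed points of an order-2 automorphism acting as inversion on `G^ab` does not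
depend on the choice of such an automorphism. -/
theorem stmt_7 {p : ℕ} [Fact p.Prime] (hp : Odd p) {G : Type*} [Group G] [Finite G]
    (hG : IsPGroup p G) :
    (∀ σ τ : MulAut G, orderOf σ = 2 → orderOf τ = 2 →
      (∀ x : G, (QuotientGroup.mk (σ x) : G ⧸ frattini G) = QuotientGroup.mk (τ x)) →
      IsConj σ τ) ∧
    (∀ σ τ : MulAut G, orderOf σ = 2 → orderOf τ = 2 →
      (∀ x : G, Abelianization.of (σ x) = (Abelianization.of x)⁻¹) →
      (∀ x : G, Abelianization.of (τ x) = (Abelianization.of x)⁻¹) →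
      Nat.card {x : G // σ x = x} = Nat.card {x : G // τ x = x}) := by
  have main : ∀ σ τ : MulAut G, orderOf σ = 2 → orderOf τ = 2 →
      (∀ x : G, (QuotientGroup.mk (σ x) : G ⧸ frattini G) = QuotientGroup.mk (τ x)) →
      IsConj σ τ := by
    intro σ τ hσ hτ h
    have hσ2 : σ * σ = 1 := by
      have := pow_orderOf_eq_one σ; rwa [hσ, pow_two] at this
    have hτ2 : τ * τ = 1 := by
      have := pow_orderOf_eq_one τ; rwa [hτ, pow_two] at this
    set a : MulAut G := τ * σ with ha
    have htriv : ∀ x : G, (QuotientGroup.mk (a x) : G ⧸ frattini G) = QuotientGroup.mk x := by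
      intro x
      have h1 : a x = τ (σ x) := rfl
      have h2 : ((τ (σ x) : G) : G ⧸ frattini G) = ((σ (σ x) : G) : G ⧸ frattini G) :=
        (h (σ x)).symm
      have h3 : σ (σ x) = x := by
        have := congrArg (fun f : MulAut G => f x) hσ2
        simpa [MulAut.mul_apply] using this
      rw [h1, h2, h3]
    have htrivpow : ∀ (k : ℕ) (x : G),
        (QuotientGroup.mk ((a ^ k) x) : G ⧸ frattini G) = QuotientGroup.mk x := by
      intro k
      induction k with
      | zero => intro x; simp
      | succ n ih =>
        intro x
        have : (a ^ (n + 1)) x = a ((a ^ n) x) := by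
          rw [pow_succ']
          rfl
        rw [this, htriv, ih]
    -- order of a is odd
    have hodd : Odd (orderOf a) := by
      by_contra hev
      rw [Nat.odd_iff] at hev
      have hpos : 0 < orderOf a := orderOf_pos a
      set m := orderOf a / 2 with hmd
      have hm' : orderOf a = 2 * m := by omega
      have hmpos : 0 < m := by omega
      set b : MulAut G := a ^ m with hbd
      have hb2 : b * b = 1 := by
        rw [hbd, ← pow_add]
        have : m + m = orderOf a := by omega
        rw [this, pow_orderOf_eq_one]
      have hb1 : b = 1 := aux_invol_trivial hp hG b hb2 (htrivpow m)
      have : orderOf a ∣ m := orderOf_dvd_of_pow_eq_one (by rw [← hbd, hb1])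
      have := Nat.le_of_dvd hmpos this
      omega
    obtain ⟨t, ht⟩ := hodd
    -- σ conjugates a to a⁻¹
    have hτa : τ = a * σ := by
      rw [ha, mul_assoc, hσ2, mul_one]
    have hconj : σ * a = a⁻¹ * σ := by
      have hainv : a⁻¹ = σ * τ := by
        rw [ha]
        have hσi : σ⁻¹ = σ := inv_eq_of_mul_eq_one_right hσ2
        have hτi : τ⁻¹ = τ := inv_eq_of_mul_eq_one_right hτ2
        rw [mul_inv_rev, hσi, hτi]
      rw [hainv, ha, mul_assoc]
    have hconjpow : ∀ k : ℕ, σ * a ^ k = (a⁻¹) ^ k * σ := by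
      intro k
      induction k with
      | zero => simp
      | succ n ih =>
        rw [pow_succ, ← mul_assoc, ih, mul_assoc, hconj, pow_succ, mul_assoc]
    have hapow : a ^ (t + 1) * a ^ (t + 1) = a := by
      rw [← pow_add]
      have h4 : t + 1 + (t + 1) = orderOf a + 1 := by omega
      rw [h4, pow_succ, pow_orderOf_eq_one, one_mul]
    rw [isConj_iff]
    refine ⟨a ^ (t + 1), ?_⟩
    rw [mul_inv_eq_iff_eq_mul]
    show a ^ (t + 1) * σ = τ * a ^ (t + 1)
    rw [hτa, mul_assoc, hconjpow (t + 1), inv_pow, ← mul_assoc]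
    congr 1
    rw [eq_mul_inv_iff_mul_eq]
    exact hapow
  refine ⟨main, ?_⟩
  intro σ τ hσ hτ hσab hτab
  have hcf : commutator G ≤ frattini G := aux_commutator_le_frattini hG
  have hmod : ∀ x : G,
      (QuotientGroup.mk (σ x) : G ⧸ frattini G) = QuotientGroup.mk (τ x) := by
    intro x
    have hab : Abelianization.of (σ x) = Abelianization.of (τ x) := by
      rw [hσab, hτab]
    have : (σ x)⁻¹ * τ x ∈ commutator G := QuotientGroup.eq.mp hab
    exact QuotientGroup.eq.mpr (hcf this)
  obtain ⟨c, hc⟩ := isConj_iff.mp (main σ τ hσ hτ hmod)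
  have hce : c * σ = τ * c := by rw [← hc]; group
  have hfix : ∀ x : G, σ x = x → τ (c x) = c x := by
    intro x hx
    have h1 : (c * σ) x = (τ * c) x := by rw [hce]
    simpa [MulAut.mul_apply, hx] using h1.symm
  have hfix' : ∀ y : G, τ y = y → σ (c⁻¹ y) = c⁻¹ y := by
    intro y hy
    have h2 : σ * c⁻¹ = c⁻¹ * τ := by
      calc σ * c⁻¹ = c⁻¹ * (c * σ) * c⁻¹ := by group
        _ = c⁻¹ * (τ * c) * c⁻¹ := by rw [hce]
        _ = c⁻¹ * τ := by group
    have h1 : (σ * c⁻¹) y = (c⁻¹ * τ) y := by rw [h2]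
    simpa [MulAut.mul_apply, hy] using h1
  refine Nat.card_congr ⟨fun x => ⟨c x.1, hfix x.1 x.2⟩, fun y => ⟨c⁻¹ y.1, hfix' y.1 y.2⟩,
    fun x => ?_, fun y => ?_⟩
  · ext
    simp
  · ext
    simp
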